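/- arXiv:2411.17327 — 3 statements merged into one kernel-verified Lean document; each statement's English description precedes it below -/
import Mathlib

section
/- Let k ≥ 1 be a natural number, let t be a nonzero real number, let F(z) = π^4/(90·k^2·z) − π^2/(6·k·z^2) − 1/(2·z^3) + π·cosh(π·√z/√k)/(2·z^2·√(z·k)·sinh(π·√z/√k)) (principal square root), and set H(z) = F(z−it) − F(z+it). Then the series Σ_{r=1}^{∞} (−1)^r e^{πirβ} H(r) and Σ_{r=1}^{∞} (−1)^r e^{−πirβ} H(−r) converge absolutely, and the convergence is uniform for β ∈ [−1,1]. -/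
open Filter

/-- The function `F` of Lemma 7 of the paper. -/
noncomputable def FF (k : ℕ) (z : ℂ) : ℂ :=
  (Real.pi : ℂ) ^ 4 / (90 * (k : ℂ) ^ 2 * z)
    - (Real.pi : ℂ) ^ 2 / (6 * (k : ℂ) * z ^ 2)
    - 1 / (2 * z ^ 3)
    + (Real.pi : ℂ) * Complex.cosh ((Real.pi : ℂ) * z ^ ((1 : ℂ)/2) / (Real.sqrt k : ℂ)) /
        (2 * z ^ 2 * (z * (k : ℂ)) ^ ((1 : ℂ)/2) *
          Complex.sinh ((Real.pi : ℂ) * z ^ ((1 : ℂ)/2) / (Real.sqrt k : ℂ)))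

/-- `H(z) = F(z - it) - F(z + it)`. -/
noncomputable def HH (k : ℕ) (t : ℝ) (z : ℂ) : ℂ :=
  FF k (z - Complex.I * (t : ℂ)) - FF k (z + Complex.I * (t : ℂ))


open Complex in
lemma myNormCoshLe (w : ℂ) : ‖Complex.cosh w‖ ≤ Real.cosh w.re := by
  rw [Complex.cosh, Real.cosh_eq, norm_div]
  simp only [Complex.norm_two]
  gcongr
  calc ‖Complex.exp w + Complex.exp (-w)‖
      ≤ ‖Complex.exp w‖ + ‖Complex.exp (-w)‖ := norm_add_le _ _
    _ = Real.exp w.re + Real.exp (-w.re) := by rw [Complex.norm_exp, Complex.norm_exp, Complex.neg_re]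

lemma mySinhGe (w : ℂ) : Real.sinh w.re ≤ ‖Complex.sinh w‖ := by
  rw [Complex.sinh, Real.sinh_eq, norm_div]
  simp only [Complex.norm_two]
  gcongr
  calc Real.exp w.re - Real.exp (-w.re)
      = ‖Complex.exp w‖ - ‖Complex.exp (-w)‖ := by
        rw [Complex.norm_exp, Complex.norm_exp, Complex.neg_re]
    _ ≤ ‖Complex.exp w - Complex.exp (-w)‖ := by
        simpa using norm_sub_norm_le (Complex.exp w) (Complex.exp (-w))

lemma myCothBound {w : ℂ} (hw : 0 < w.re) :
    ‖Complex.cosh w / Complex.sinh w‖ ≤ 1 + 1 / w.re := by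
  set x := w.re with hx
  have hs : 0 < Real.sinh x := Real.sinh_pos_iff.2 hw
  rw [norm_div]
  have h1 : ‖Complex.cosh w‖ / ‖Complex.sinh w‖
      ≤ Real.cosh x / Real.sinh x :=
    div_le_div₀ ((Real.cosh_pos x).le) (myNormCoshLe w) hs (mySinhGe w)
  refine h1.trans ?_
  rw [div_le_iff₀ hs]
  have h2 : x ≤ Real.sinh x := Real.self_le_sinh_iff.2 hw.le
  have h3 : Real.cosh x - Real.sinh x = Real.exp (-x) := Real.cosh_sub_sinh x
  have h4 : Real.exp (-x) ≤ 1 := Real.exp_le_one_iff.2 (by linarith)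
  have h5 : (1 + 1/x) * Real.sinh x = Real.sinh x + Real.sinh x / x := by ring
  rw [h5]
  have h6 : 1 ≤ Real.sinh x / x := (le_div_iff₀ hw).2 (by linarith)
  nlinarith
open Complex in
lemma myCpowHalfRe {a : ℂ} : (a ^ ((1:ℂ)/2)).re = Real.sqrt ((‖a‖ + a.re)/2) := by
  rw [show ((1:ℂ)/2) = (2⁻¹ : ℂ) by norm_num, Complex.cpow_inv_two_re]

lemma myCpowHalfRePos {a : ℂ} (him : a.im ≠ 0) : 0 < (a ^ ((1:ℂ)/2)).re := by
  rw [myCpowHalfRe]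
  apply Real.sqrt_pos.2
  have h := Complex.abs_re_lt_norm.2 him
  have := neg_abs_le a.re
  linarith

lemma myTBound (k : ℕ) (hk : 1 ≤ k) {a : ℂ} (him : a.im ≠ 0) :
    ‖(Real.pi : ℂ) * Complex.cosh ((Real.pi : ℂ) * a ^ ((1 : ℂ)/2) / (Real.sqrt k : ℂ)) /
      (2 * a ^ 2 * (a * (k : ℂ)) ^ ((1 : ℂ)/2) *
        Complex.sinh ((Real.pi : ℂ) * a ^ ((1 : ℂ)/2) / (Real.sqrt k : ℂ)))‖
    ≤ (Real.pi + Real.sqrt k / (a ^ ((1:ℂ)/2)).re) / (2 * ‖a‖ ^ ((5:ℝ)/2)) := by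
  have ha : a ≠ 0 := fun h => him (by simp [h])
  have haa : 0 < ‖a‖ := by simpa using ha
  have hk0 : (0:ℝ) < (k:ℝ) := by exact_mod_cast hk
  have hks : (1:ℝ) ≤ Real.sqrt k := Real.one_le_sqrt.2 (by exact_mod_cast hk)
  have hks0 : (0:ℝ) < Real.sqrt k := by linarith
  set s : ℂ := a ^ ((1:ℂ)/2) with hs
  set w : ℂ := (Real.pi : ℂ) * s / (Real.sqrt k : ℂ) with hw
  have hsre : 0 < s.re := myCpowHalfRePos him
  have hwre : w.re = Real.pi * s.re / Real.sqrt k := by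
    rw [hw, show (Real.pi : ℂ) * s / ((Real.sqrt k : ℝ) : ℂ)
        = (((Real.pi / Real.sqrt k : ℝ)) : ℂ) * s by push_cast; ring,
      Complex.re_ofReal_mul]
    ring
  have hw0 : 0 < w.re := by rw [hwre]; positivity
  -- norm of denominator piece
  have habs : ‖2 * a ^ 2 * (a * (k : ℂ)) ^ ((1 : ℂ)/2)‖
      = 2 * ‖a‖ ^ ((5:ℝ)/2) * Real.sqrt k := by
    rw [norm_mul, norm_mul, Complex.norm_two, norm_pow,
      show ((1:ℂ)/2) = (((1/2 : ℝ)) : ℂ) by push_cast; ring,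
      Complex.norm_cpow_real, norm_mul, Complex.norm_natCast]
    rw [Real.mul_rpow haa.le hk0.le, Real.sqrt_eq_rpow]
    have hpow : ‖a‖ ^ 2 * ‖a‖ ^ ((1:ℝ)/2) = ‖a‖ ^ ((5:ℝ)/2) := by
      rw [← Real.rpow_natCast (‖a‖) 2, ← Real.rpow_add haa]
      norm_num
    rw [← hpow]
    ring
  have key : ‖(Real.pi : ℂ) * Complex.cosh w /
        (2 * a ^ 2 * (a * (k : ℂ)) ^ ((1 : ℂ)/2) * Complex.sinh w)‖
      = Real.pi / (2 * ‖a‖ ^ ((5:ℝ)/2) * Real.sqrt k) *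
        ‖Complex.cosh w / Complex.sinh w‖ := by
    rw [mul_div_mul_comm, norm_mul, norm_div, habs, Complex.norm_real, Real.norm_eq_abs,
      abs_of_pos Real.pi_pos]
  rw [key]
  have hcoth := myCothBound hw0
  have hX : 0 < ‖a‖ ^ ((5:ℝ)/2) := Real.rpow_pos_of_pos haa _
  have h1 : Real.pi / (2 * ‖a‖ ^ ((5:ℝ)/2) * Real.sqrt k) *
        ‖Complex.cosh w / Complex.sinh w‖
      ≤ Real.pi / (2 * ‖a‖ ^ ((5:ℝ)/2) * Real.sqrt k) * (1 + 1 / w.re) :=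
    mul_le_mul_of_nonneg_left hcoth (by positivity)
  refine h1.trans ?_
  rw [hwre]
  have hrw : 1 / (Real.pi * s.re / Real.sqrt k) = Real.sqrt k / (Real.pi * s.re) :=
    one_div_div _ _
  rw [hrw]
  have e1 : Real.pi / (2 * ‖a‖ ^ ((5:ℝ)/2) * Real.sqrt k) *
        (1 + Real.sqrt k / (Real.pi * s.re))
      = Real.pi / (2 * ‖a‖ ^ ((5:ℝ)/2) * Real.sqrt k)
        + 1 / (2 * ‖a‖ ^ ((5:ℝ)/2) * s.re) := by
    field_simp
    try ring
  have e2 : (Real.pi + Real.sqrt k / s.re) / (2 * ‖a‖ ^ ((5:ℝ)/2))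
      = Real.pi / (2 * ‖a‖ ^ ((5:ℝ)/2))
        + Real.sqrt k / (2 * ‖a‖ ^ ((5:ℝ)/2) * s.re) := by
    field_simp
    try ring
  rw [e1, e2]
  apply add_le_add
  · exact div_le_div_of_nonneg_left Real.pi_pos.le (by positivity) (by nlinarith)
  · exact div_le_div_of_nonneg_right hks (by positivity)
lemma myAbsSub (x y : ℂ) : ‖x - y‖ ≤ ‖x‖ + ‖y‖ := by
  simpa [sub_eq_add_neg] using norm_add_le x (-y)

lemma myFFDiff (k : ℕ) (hk : 1 ≤ k) (t : ℝ) {a b : ℂ} {R M : ℝ} (hR : 1 ≤ R)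
    (haim : a.im ≠ 0) (hbim : b.im ≠ 0)
    (hRa : R ≤ ‖a‖) (hRb : R ≤ ‖b‖)
    (hab : b - a = 2 * Complex.I * (t : ℂ))
    (hM : 0 ≤ M)
    (hMa : Real.sqrt k / (a ^ ((1:ℂ)/2)).re ≤ M * Real.sqrt R)
    (hMb : Real.sqrt k / (b ^ ((1:ℂ)/2)).re ≤ M * Real.sqrt R) :
    ‖FF k a - FF k b‖
      ≤ (Real.pi^4 * |t| / 45 + Real.pi^2 / 3 + 1 + Real.pi + M) / R^2 := by
  have hR0 : (0:ℝ) < R := by linarith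
  have ha0 : a ≠ 0 := fun h => haim (by simp [h])
  have hb0 : b ≠ 0 := fun h => hbim (by simp [h])
  have haa : 0 < ‖a‖ := hR0.trans_le hRa
  have hbb : 0 < ‖b‖ := hR0.trans_le hRb
  have hkR : (1:ℝ) ≤ (k:ℝ) := by exact_mod_cast hk
  have hkc : (k:ℂ) ≠ 0 := Nat.cast_ne_zero.2 (by omega)
  have hsR : 1 ≤ Real.sqrt R := Real.one_le_sqrt.2 hR
  set Ta : ℂ := (Real.pi : ℂ) * Complex.cosh ((Real.pi : ℂ) * a ^ ((1 : ℂ)/2) / (Real.sqrt k : ℂ)) /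
      (2 * a ^ 2 * (a * (k : ℂ)) ^ ((1 : ℂ)/2) *
        Complex.sinh ((Real.pi : ℂ) * a ^ ((1 : ℂ)/2) / (Real.sqrt k : ℂ))) with hTa
  set Tb : ℂ := (Real.pi : ℂ) * Complex.cosh ((Real.pi : ℂ) * b ^ ((1 : ℂ)/2) / (Real.sqrt k : ℂ)) /
      (2 * b ^ 2 * (b * (k : ℂ)) ^ ((1 : ℂ)/2) *
        Complex.sinh ((Real.pi : ℂ) * b ^ ((1 : ℂ)/2) / (Real.sqrt k : ℂ))) with hTb
  have hsplit : FF k a - FF k b =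
      ((Real.pi:ℂ)^4/(90*(k:ℂ)^2*a) - (Real.pi:ℂ)^4/(90*(k:ℂ)^2*b))
      - ((Real.pi:ℂ)^2/(6*(k:ℂ)*a^2) - (Real.pi:ℂ)^2/(6*(k:ℂ)*b^2))
      - (1/(2*a^3) - 1/(2*b^3)) + (Ta - Tb) := by
    simp only [FF, hTa, hTb]; ring
  -- bound for first difference
  have hd1 : ‖(Real.pi:ℂ)^4/(90*(k:ℂ)^2*a) - (Real.pi:ℂ)^4/(90*(k:ℂ)^2*b)‖
      ≤ Real.pi^4 * |t| / 45 / R^2 := by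
    have h1ab : (1:ℂ)/a - 1/b = (b - a)/(a*b) := by
      rw [div_sub_div _ _ ha0 hb0, one_mul, mul_one]
    have e : (Real.pi:ℂ)^4/(90*(k:ℂ)^2*a) - (Real.pi:ℂ)^4/(90*(k:ℂ)^2*b)
        = (Real.pi:ℂ)^4 * (2*Complex.I*(t:ℂ)) / (90*(k:ℂ)^2*a*b) := by
      calc (Real.pi:ℂ)^4/(90*(k:ℂ)^2*a) - (Real.pi:ℂ)^4/(90*(k:ℂ)^2*b)
          = (Real.pi:ℂ)^4/(90*(k:ℂ)^2) * ((1:ℂ)/a - 1/b) := by ring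
        _ = (Real.pi:ℂ)^4/(90*(k:ℂ)^2) * ((2*Complex.I*(t:ℂ))/(a*b)) := by rw [h1ab, hab]
        _ = (Real.pi:ℂ)^4 * (2*Complex.I*(t:ℂ)) / (90*(k:ℂ)^2*a*b) := by ring
    rw [e, norm_div]
    have en : ‖(Real.pi:ℂ)^4 * (2*Complex.I*(t:ℂ))‖ = Real.pi^4 * (2*|t|) := by
      simp [norm_mul, norm_pow, Complex.norm_real, Real.norm_eq_abs, abs_of_pos Real.pi_pos, Complex.norm_I,
        Complex.norm_two]
    have ed : ‖90*(k:ℂ)^2*a*b‖ = 90*(k:ℝ)^2*‖a‖*‖b‖ := by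
      simp [norm_mul, norm_pow, Complex.norm_natCast]
      try norm_num
    rw [en, ed]
    calc Real.pi^4 * (2*|t|) / (90*(k:ℝ)^2*‖a‖*‖b‖)
        ≤ Real.pi^4 * (2*|t|) / (90*1^2*R*R) := by
          gcongr <;> first | exact hkR | exact hRa | exact hRb | positivity
      _ = Real.pi^4 * |t| / 45 / R^2 := by ring
  -- second
  have habs2 : ∀ c : ℂ, c ≠ 0 → R ≤ ‖c‖ →
      ‖(Real.pi:ℂ)^2/(6*(k:ℂ)*c^2)‖ ≤ Real.pi^2/6/R^2 := by
    intro c hc hRc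
    rw [norm_div]
    have : ‖(Real.pi:ℂ)^2‖ = Real.pi^2 := by
      simp [norm_pow, Complex.norm_real, Real.norm_eq_abs, abs_of_pos Real.pi_pos]
    rw [this]
    have : ‖6*(k:ℂ)*c^2‖ = 6*(k:ℝ)*‖c‖^2 := by
      simp [norm_mul, norm_pow, Complex.norm_natCast]
    rw [this]
    calc Real.pi^2 / (6*(k:ℝ)*‖c‖^2) ≤ Real.pi^2 / (6*1*R^2) := by
          gcongr <;> first | exact hkR | exact hRc | positivity
      _ = Real.pi^2/6/R^2 := by ring
  have hd2 : ‖(Real.pi:ℂ)^2/(6*(k:ℂ)*a^2) - (Real.pi:ℂ)^2/(6*(k:ℂ)*b^2)‖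
      ≤ Real.pi^2 / 3 / R^2 := by
    calc ‖(Real.pi:ℂ)^2/(6*(k:ℂ)*a^2) - (Real.pi:ℂ)^2/(6*(k:ℂ)*b^2)‖
        ≤ ‖(Real.pi:ℂ)^2/(6*(k:ℂ)*a^2)‖ + ‖(Real.pi:ℂ)^2/(6*(k:ℂ)*b^2)‖ :=
          myAbsSub _ _
      _ ≤ Real.pi^2/6/R^2 + Real.pi^2/6/R^2 :=
          add_le_add (habs2 a ha0 hRa) (habs2 b hb0 hRb)
      _ = Real.pi^2/3/R^2 := by ring
  -- third
  have habs3 : ∀ c : ℂ, R ≤ ‖c‖ →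
      ‖1/(2*c^3)‖ ≤ 1/2/R^3 := by
    intro c hRc
    rw [norm_div, norm_one]
    have : ‖2*c^3‖ = 2*‖c‖^3 := by
      simp [norm_mul, norm_pow, Complex.norm_two]
    rw [this]
    calc (1:ℝ) / (2*‖c‖^3) ≤ 1 / (2*R^3) := by
          gcongr
      _ = 1/2/R^3 := by ring
  have hd3 : ‖1/(2*a^3) - 1/(2*b^3)‖ ≤ 1 / R^2 := by
    calc ‖1/(2*a^3) - 1/(2*b^3)‖
        ≤ ‖1/(2*a^3)‖ + ‖1/(2*b^3)‖ := myAbsSub _ _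
      _ ≤ 1/2/R^3 + 1/2/R^3 := add_le_add (habs3 a hRa) (habs3 b hRb)
      _ = 1/R^3 := by ring
      _ ≤ 1/R^2 := by
          gcongr
          · norm_num
  -- fourth
  have hT : ∀ c : ℂ, c.im ≠ 0 → R ≤ ‖c‖ →
      Real.sqrt k / (c ^ ((1:ℂ)/2)).re ≤ M * Real.sqrt R →
      ‖(Real.pi : ℂ) * Complex.cosh ((Real.pi : ℂ) * c ^ ((1 : ℂ)/2) / (Real.sqrt k : ℂ)) /
        (2 * c ^ 2 * (c * (k : ℂ)) ^ ((1 : ℂ)/2) *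
          Complex.sinh ((Real.pi : ℂ) * c ^ ((1 : ℂ)/2) / (Real.sqrt k : ℂ)))‖
      ≤ (Real.pi + M)/2/R^2 := by
    intro c hcim hRc hMc
    have hcc : 0 < ‖c‖ := hR0.trans_le hRc
    have hsre : 0 < (c ^ ((1:ℂ)/2)).re := myCpowHalfRePos hcim
    refine (myTBound k hk hcim).trans ?_
    have h52 : R^((5:ℝ)/2) = R^2 * Real.sqrt R := by
      rw [Real.sqrt_eq_rpow, ← Real.rpow_natCast R 2, ← Real.rpow_add hR0]
      norm_num
    have step1 : (Real.pi + Real.sqrt k / (c ^ ((1:ℂ)/2)).re) / (2 * ‖c‖ ^ ((5:ℝ)/2))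
        ≤ (Real.pi + M * Real.sqrt R) / (2 * R ^ ((5:ℝ)/2)) := by
      have hnum : 0 ≤ Real.pi + Real.sqrt k / (c ^ ((1:ℂ)/2)).re := by positivity
      apply div_le_div₀ (by positivity) (add_le_add le_rfl hMc) (by positivity)
      have := Real.rpow_le_rpow hR0.le hRc (by norm_num : (0:ℝ) ≤ (5:ℝ)/2)
      linarith
    refine step1.trans ?_
    rw [h52]
    have e1 : (Real.pi + M * Real.sqrt R) / (2 * (R^2 * Real.sqrt R))
        = Real.pi/(2*R^2*Real.sqrt R) + M/(2*R^2) := by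
      have h1 : Real.sqrt R ≠ 0 := by positivity
      field_simp
    have e2 : (Real.pi + M)/2/R^2 = Real.pi/(2*R^2) + M/(2*R^2) := by ring
    rw [e1, e2]
    apply add_le_add _ le_rfl
    apply div_le_div_of_nonneg_left Real.pi_pos.le (by positivity)
    nlinarith
  have hd4a := hT a haim hRa hMa
  have hd4b := hT b hbim hRb hMb
  rw [hsplit]
  calc ‖((Real.pi:ℂ)^4/(90*(k:ℂ)^2*a) - (Real.pi:ℂ)^4/(90*(k:ℂ)^2*b))
      - ((Real.pi:ℂ)^2/(6*(k:ℂ)*a^2) - (Real.pi:ℂ)^2/(6*(k:ℂ)*b^2))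
      - (1/(2*a^3) - 1/(2*b^3)) + (Ta - Tb)‖
      ≤ ‖((Real.pi:ℂ)^4/(90*(k:ℂ)^2*a) - (Real.pi:ℂ)^4/(90*(k:ℂ)^2*b))
        - ((Real.pi:ℂ)^2/(6*(k:ℂ)*a^2) - (Real.pi:ℂ)^2/(6*(k:ℂ)*b^2))
        - (1/(2*a^3) - 1/(2*b^3))‖ + ‖Ta - Tb‖ := norm_add_le _ _
    _ ≤ (‖((Real.pi:ℂ)^4/(90*(k:ℂ)^2*a) - (Real.pi:ℂ)^4/(90*(k:ℂ)^2*b))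
        - ((Real.pi:ℂ)^2/(6*(k:ℂ)*a^2) - (Real.pi:ℂ)^2/(6*(k:ℂ)*b^2))‖
        + ‖1/(2*a^3) - 1/(2*b^3)‖) + (‖Ta‖ + ‖Tb‖) :=
        add_le_add (myAbsSub _ _) (myAbsSub _ _)
    _ ≤ ((‖(Real.pi:ℂ)^4/(90*(k:ℂ)^2*a) - (Real.pi:ℂ)^4/(90*(k:ℂ)^2*b)‖
        + ‖(Real.pi:ℂ)^2/(6*(k:ℂ)*a^2) - (Real.pi:ℂ)^2/(6*(k:ℂ)*b^2)‖)
        + ‖1/(2*a^3) - 1/(2*b^3)‖) + (‖Ta‖ + ‖Tb‖) := by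
        gcongr
        exact myAbsSub _ _
    _ ≤ ((Real.pi^4 * |t| / 45 / R^2 + Real.pi^2/3/R^2) + 1/R^2)
        + ((Real.pi + M)/2/R^2 + (Real.pi + M)/2/R^2) := by
        gcongr <;> first | exact hd1 | exact hd2 | exact hd3 | exact hd4a | exact hd4b
    _ = (Real.pi^4 * |t| / 45 + Real.pi^2 / 3 + 1 + Real.pi + M) / R^2 := by ring
lemma mySrePos {R : ℝ} (hR : 1 ≤ R) {a : ℂ} (hre : a.re = R) :
    (1:ℝ) ≤ (a ^ ((1:ℂ)/2)).re := by
  rw [myCpowHalfRe]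
  apply Real.one_le_sqrt.2
  have h1 := Complex.abs_re_le_norm a
  rw [hre, abs_of_pos (by linarith : (0:ℝ) < R)] at h1
  rw [hre]
  linarith

lemma mySreNeg {R t : ℝ} (hR : 1 ≤ R) (ht : t ≠ 0) {a : ℂ} (hre : a.re = -R)
    (him : a.im^2 = t^2) :
    |t| / (2 * Real.sqrt (R + |t|)) ≤ (a ^ ((1:ℂ)/2)).re := by
  have ht0 : 0 < |t| := abs_pos.2 ht
  have hRt : (0:ℝ) < R + |t| := by linarith
  rw [myCpowHalfRe, hre]
  have habs2 : ‖a‖ ^ 2 = R^2 + t^2 := by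
    rw [Complex.sq_norm, Complex.normSq_apply, hre]; linear_combination him
  have haR : R ≤ ‖a‖ := by nlinarith [norm_nonneg a]
  have haRt : ‖a‖ ≤ R + |t| := by
    have h := Complex.norm_le_abs_re_add_abs_im a
    have him' : |a.im| = |t| := by
      rw [← Real.sqrt_sq_eq_abs, ← Real.sqrt_sq_eq_abs, him]
    rw [hre, him', abs_neg, abs_of_pos (by linarith : (0:ℝ) < R)] at h
    exact h
  have hlow : t^2 / (2*(R + |t|)) ≤ ‖a‖ - R := by
    rw [div_le_iff₀ (by positivity)]
    nlinarith [sq_abs t]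
  have h4 : t^2/(4*(R+|t|)) ≤ (‖a‖ + -R)/2 := by
    have e : t^2/(4*(R+|t|)) = t^2/(2*(R+|t|))/2 := by
      rw [div_div]; congr 1; ring
    rw [e]
    linarith
  have hsq : Real.sqrt (R+|t|) ^ 2 = R + |t| := Real.sq_sqrt hRt.le
  have E : (|t|/(2*Real.sqrt (R+|t|)))^2 = t^2/(4*(R+|t|)) := by
    rw [div_pow, mul_pow, hsq, sq_abs]
    norm_num
  calc |t|/(2*Real.sqrt (R+|t|))
      = Real.sqrt ((|t|/(2*Real.sqrt (R+|t|)))^2) := (Real.sqrt_sq (by positivity)).symm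
    _ = Real.sqrt (t^2/(4*(R+|t|))) := by rw [E]
    _ ≤ Real.sqrt ((‖a‖ + -R)/2) := Real.sqrt_le_sqrt h4

noncomputable def CC (k : ℕ) (t : ℝ) : ℝ :=
  Real.pi^4 * |t| / 45 + Real.pi^2 / 3 + 1 + Real.pi
    + (Real.sqrt k + 2*Real.sqrt k*Real.sqrt (1+|t|)/|t|)

lemma myHHBound (k : ℕ) (hk : 1 ≤ k) (t : ℝ) (ht : t ≠ 0) (r : ℕ) :
    ‖HH k t ((r:ℂ)+1)‖ ≤ CC k t / ((r:ℝ)+1)^2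
      ∧ ‖HH k t (-((r:ℂ)+1))‖ ≤ CC k t / ((r:ℝ)+1)^2 := by
  have ht0 : 0 < |t| := abs_pos.2 ht
  set R : ℝ := (r:ℝ)+1 with hRdef
  have hR : 1 ≤ R := by
    rw [hRdef]; linarith [Nat.cast_nonneg (α := ℝ) r]
  have hR0 : 0 < R := by linarith
  have hsR : 1 ≤ Real.sqrt R := Real.one_le_sqrt.2 hR
  set M : ℝ := Real.sqrt k + 2*Real.sqrt k*Real.sqrt (1+|t|)/|t| with hMdef
  have hX0 : 0 ≤ 2*Real.sqrt k*Real.sqrt (1+|t|)/|t| := by positivity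
  have hM : 0 ≤ M := by positivity
  have hkM : Real.sqrt k ≤ M * Real.sqrt R := by
    have h1 : Real.sqrt k ≤ M := le_add_of_nonneg_right hX0
    nlinarith [Real.sqrt_nonneg (k:ℝ)]
  constructor
  · -- positive case
    set a : ℂ := ((r:ℂ)+1) - Complex.I*(t:ℂ) with hadef
    set b : ℂ := ((r:ℂ)+1) + Complex.I*(t:ℂ) with hbdef
    have hare : a.re = R := by simp [hadef, hRdef]
    have hbre : b.re = R := by simp [hbdef, hRdef]
    have haim : a.im = -t := by simp [hadef]
    have hbim : b.im = t := by simp [hbdef]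
    have haim' : a.im ≠ 0 := by rw [haim]; simpa using ht
    have hbim' : b.im ≠ 0 := by rw [hbim]; exact ht
    have hRa : R ≤ ‖a‖ := by
      have := Complex.abs_re_le_norm a
      rw [hare, abs_of_pos hR0] at this; exact this
    have hRb : R ≤ ‖b‖ := by
      have := Complex.abs_re_le_norm b
      rw [hbre, abs_of_pos hR0] at this; exact this
    have hab : b - a = 2 * Complex.I * (t:ℂ) := by rw [hadef, hbdef]; ring
    have hMa : Real.sqrt k / (a ^ ((1:ℂ)/2)).re ≤ M * Real.sqrt R := by
      have h1 := mySrePos hR hare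
      calc Real.sqrt k / (a ^ ((1:ℂ)/2)).re ≤ Real.sqrt k :=
            div_le_self (Real.sqrt_nonneg _) h1
        _ ≤ M * Real.sqrt R := hkM
    have hMb : Real.sqrt k / (b ^ ((1:ℂ)/2)).re ≤ M * Real.sqrt R := by
      have h1 := mySrePos hR hbre
      calc Real.sqrt k / (b ^ ((1:ℂ)/2)).re ≤ Real.sqrt k :=
            div_le_self (Real.sqrt_nonneg _) h1
        _ ≤ M * Real.sqrt R := hkM
    have := myFFDiff k hk t hR haim' hbim' hRa hRb hab hM hMa hMb
    simpa [HH, CC, hadef, hbdef, hMdef] using this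
  · -- negative case
    set a : ℂ := (-((r:ℂ)+1)) - Complex.I*(t:ℂ) with hadef
    set b : ℂ := (-((r:ℂ)+1)) + Complex.I*(t:ℂ) with hbdef
    have hare : a.re = -R := by simp [hadef, hRdef]
    have hbre : b.re = -R := by simp [hbdef, hRdef]
    have haim : a.im = -t := by simp [hadef]
    have hbim : b.im = t := by simp [hbdef]
    have haim' : a.im ≠ 0 := by rw [haim]; simpa using ht
    have hbim' : b.im ≠ 0 := by rw [hbim]; exact ht
    have hRa : R ≤ ‖a‖ := by
      have h := Complex.abs_re_le_norm a
      rw [hare, abs_neg, abs_of_pos hR0] at h; exact h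
    have hRb : R ≤ ‖b‖ := by
      have h := Complex.abs_re_le_norm b
      rw [hbre, abs_neg, abs_of_pos hR0] at h; exact h
    have hab : b - a = 2 * Complex.I * (t:ℂ) := by rw [hadef, hbdef]; ring
    have hsrt : (0:ℝ) < |t| / (2 * Real.sqrt (R + |t|)) := by positivity
    have hsqle : Real.sqrt (R+|t|) ≤ Real.sqrt R * Real.sqrt (1+|t|) := by
      rw [← Real.sqrt_mul hR0.le]
      apply Real.sqrt_le_sqrt
      nlinarith [abs_nonneg t]
    have hMgen : ∀ c : ℂ, c.re = -R → c.im^2 = t^2 →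
        Real.sqrt k / (c ^ ((1:ℂ)/2)).re ≤ M * Real.sqrt R := by
      intro c hcre hcim
      have h1 := mySreNeg hR ht hcre hcim
      calc Real.sqrt k / (c ^ ((1:ℂ)/2)).re
          ≤ Real.sqrt k / (|t| / (2 * Real.sqrt (R + |t|))) :=
            div_le_div_of_nonneg_left (Real.sqrt_nonneg _) hsrt h1
        _ = 2*Real.sqrt k*Real.sqrt (R+|t|)/|t| := by
            rw [div_div_eq_mul_div]; ring
        _ ≤ 2*Real.sqrt k*(Real.sqrt R * Real.sqrt (1+|t|))/|t| := by gcongr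
        _ = (2*Real.sqrt k*Real.sqrt (1+|t|)/|t|) * Real.sqrt R := by ring
        _ ≤ M * Real.sqrt R := by
            apply mul_le_mul_of_nonneg_right _ (Real.sqrt_nonneg R)
            rw [hMdef]
            exact le_add_of_nonneg_left (Real.sqrt_nonneg _)
    have hMa := hMgen a hare (by rw [haim]; ring)
    have hMb := hMgen b hbre (by rw [hbim])
    have := myFFDiff k hk t hR haim' hbim' hRa hRb hab hM hMa hMb
    simpa [HH, CC, hadef, hbdef, hMdef] using this
lemma myExpNormOne (x : ℂ) (hx : x.re = 0) : ‖Complex.exp x‖ = 1 := by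
  rw [Complex.norm_exp, hx, Real.exp_zero]

lemma myReZero (r : ℕ) (β : ℝ) :
    ((Real.pi : ℂ) * Complex.I * ((r : ℂ) + 1) * (β : ℂ)).re = 0 := by
  simp [Complex.mul_re, Complex.mul_im]

lemma myTermNorm1 (k : ℕ) (t : ℝ) (r : ℕ) (β : ℝ) :
    ‖(-1 : ℂ) ^ (r + 1) * Complex.exp (Real.pi * Complex.I * ((r : ℂ) + 1) * (β : ℂ)) *
        HH k t ((r : ℂ) + 1)‖ = ‖HH k t ((r : ℂ) + 1)‖ := by
  rw [norm_mul, norm_mul, norm_pow, norm_neg, norm_one, one_pow,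
    myExpNormOne _ (myReZero r β), one_mul, one_mul]

lemma myTermNorm2 (k : ℕ) (t : ℝ) (r : ℕ) (β : ℝ) :
    ‖(-1 : ℂ) ^ (r + 1) * Complex.exp (-(Real.pi * Complex.I * ((r : ℂ) + 1) * (β : ℂ))) *
        HH k t (-((r : ℂ) + 1))‖ = ‖HH k t (-((r : ℂ) + 1))‖ := by
  rw [norm_mul, norm_mul, norm_pow, norm_neg, norm_one, one_pow,
    myExpNormOne _ (by rw [Complex.neg_re, myReZero r β, neg_zero]), one_mul, one_mul]

lemma mySummableCC (k : ℕ) (t : ℝ) :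
    Summable (fun r : ℕ => CC k t / ((r:ℝ)+1)^2) := by
  have h1 : Summable (fun n : ℕ => 1/((n:ℝ))^2) :=
    Real.summable_one_div_nat_pow.2 one_lt_two
  have h2 : Summable (fun n : ℕ => 1/((n:ℝ)+1)^2) := by
    have := (summable_nat_add_iff 1).2 h1
    refine this.congr fun n => ?_
    push_cast
    ring
  refine (h2.mul_left (CC k t)).congr fun n => ?_
  rw [mul_one_div]

/-- Lemma 7 of the paper. -/
theorem statement3 (k : ℕ) (hk : 1 ≤ k) (t : ℝ) (ht : t ≠ 0) :
    (∀ β ∈ Set.Icc (-1 : ℝ) 1, Summable (fun r : ℕ =>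
      ‖(-1 : ℂ) ^ (r + 1) * Complex.exp (Real.pi * Complex.I * ((r : ℂ) + 1) * (β : ℂ)) *
        HH k t ((r : ℂ) + 1)‖)) ∧
    (∀ β ∈ Set.Icc (-1 : ℝ) 1, Summable (fun r : ℕ =>
      ‖(-1 : ℂ) ^ (r + 1) * Complex.exp (-(Real.pi * Complex.I * ((r : ℂ) + 1) * (β : ℂ))) *
        HH k t (-((r : ℂ) + 1))‖)) ∧
    TendstoUniformlyOn
      (fun n : ℕ => fun β : ℝ => ∑ r ∈ Finset.range n,
        (-1 : ℂ) ^ (r + 1) * Complex.exp (Real.pi * Complex.I * ((r : ℂ) + 1) * (β : ℂ)) *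
          HH k t ((r : ℂ) + 1))
      (fun β : ℝ => ∑' r : ℕ,
        (-1 : ℂ) ^ (r + 1) * Complex.exp (Real.pi * Complex.I * ((r : ℂ) + 1) * (β : ℂ)) *
          HH k t ((r : ℂ) + 1))
      atTop (Set.Icc (-1 : ℝ) 1) ∧
    TendstoUniformlyOn
      (fun n : ℕ => fun β : ℝ => ∑ r ∈ Finset.range n,
        (-1 : ℂ) ^ (r + 1) * Complex.exp (-(Real.pi * Complex.I * ((r : ℂ) + 1) * (β : ℂ))) *
          HH k t (-((r : ℂ) + 1)))
      (fun β : ℝ => ∑' r : ℕ,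
        (-1 : ℂ) ^ (r + 1) * Complex.exp (-(Real.pi * Complex.I * ((r : ℂ) + 1) * (β : ℂ))) *
          HH k t (-((r : ℂ) + 1)))
      atTop (Set.Icc (-1 : ℝ) 1) := by
  have hsum := mySummableCC k t
  have hb1 : ∀ (r : ℕ) (β : ℝ),
      ‖(-1 : ℂ) ^ (r + 1) * Complex.exp (Real.pi * Complex.I * ((r : ℂ) + 1) * (β : ℂ)) *
        HH k t ((r : ℂ) + 1)‖ ≤ CC k t / ((r:ℝ)+1)^2 := fun r β => by
    rw [myTermNorm1 k t r β]
    exact (myHHBound k hk t ht r).1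
  have hb2 : ∀ (r : ℕ) (β : ℝ),
      ‖(-1 : ℂ) ^ (r + 1) * Complex.exp (-(Real.pi * Complex.I * ((r : ℂ) + 1) * (β : ℂ))) *
        HH k t (-((r : ℂ) + 1))‖ ≤ CC k t / ((r:ℝ)+1)^2 := fun r β => by
    rw [myTermNorm2 k t r β]
    exact (myHHBound k hk t ht r).2
  refine ⟨fun β _ => ?_, fun β _ => ?_, ?_, ?_⟩
  · exact Summable.of_nonneg_of_le (fun r => norm_nonneg _) (fun r => hb1 r β) hsum
  · exact Summable.of_nonneg_of_le (fun r => norm_nonneg _) (fun r => hb2 r β) hsum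
  · exact tendstoUniformlyOn_tsum_nat hsum (fun r β _ => hb1 r β)
  · exact tendstoUniformlyOn_tsum_nat hsum (fun r β _ => hb2 r β)
end

section
/- Let k, s ≥ 1 be natural numbers, let t be a nonzero real number, and let F(z) = Σ_{n=1}^{∞} 1/(k^2·n^{4s}·(k·n^{2s}+z)). Then the series Σ_{r=1}^{∞} (−1)^r e^{πirβ}(F(r−it)−F(r+it)) and Σ_{r=1}^{∞} (−1)^r e^{−πirβ}(F(−r−it)−F(−r+it)) converge absolutely, and the convergence is uniform for β ∈ [−1,1]. -/
open Filter

/-- The function `F(z) = Σ_{n=1}^∞ 1/(k²·n^{4s}·(k·n^{2s}+z))` of Lemma 10. -/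
noncomputable def Fks (k s : ℕ) (z : ℂ) : ℂ :=
  ∑' n : ℕ, 1 / ((k : ℂ) ^ 2 * ((n : ℂ) + 1) ^ (4 * s) *
    ((k : ℂ) * ((n : ℂ) + 1) ^ (2 * s) + z))

namespace St5

noncomputable def A (k s n : ℕ) : ℝ := (k:ℝ)^2 * ((n:ℝ)+1)^(4*s)
noncomputable def B (k s n : ℕ) : ℝ := (k:ℝ) * ((n:ℝ)+1)^(2*s)

lemma A_pos (k s : ℕ) (hk : 1 ≤ k) (n : ℕ) : 0 < A k s n := by
  have hk' : (0:ℝ) < (k:ℝ) := by exact_mod_cast hk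
  have hn : (0:ℝ) < (n:ℝ)+1 := by positivity
  exact mul_pos (pow_pos hk' 2) (pow_pos hn _)

lemma A_nonneg (k s n : ℕ) : 0 ≤ A k s n := by
  unfold A; positivity

lemma A_ge (k s : ℕ) (hk : 1 ≤ k) (hs : 1 ≤ s) (n : ℕ) : ((n:ℝ)+1)^2 ≤ A k s n := by
  have hk' : (1:ℝ) ≤ (k:ℝ) := by exact_mod_cast hk
  have hn : (1:ℝ) ≤ (n:ℝ)+1 := le_add_of_nonneg_left (Nat.cast_nonneg n)
  have h1 : ((n:ℝ)+1)^2 ≤ ((n:ℝ)+1)^(4*s) := by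
    apply pow_le_pow_right₀ hn; omega
  have h2 : (1:ℝ) ≤ (k:ℝ)^2 := one_le_pow₀ hk'
  calc ((n:ℝ)+1)^2 ≤ ((n:ℝ)+1)^(4*s) := h1
    _ = 1 * ((n:ℝ)+1)^(4*s) := (one_mul _).symm
    _ ≤ (k:ℝ)^2 * ((n:ℝ)+1)^(4*s) := by
        apply mul_le_mul_of_nonneg_right h2; positivity

lemma summable_inv_sq : Summable (fun n : ℕ => 1/((n:ℝ)+1)^2) := by
  have h : Summable (fun n : ℕ => 1 / (n : ℝ) ^ 2) :=
    Real.summable_one_div_nat_pow.mpr one_lt_two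
  have h2 := (summable_nat_add_iff 1).mpr h
  simpa using h2

lemma summable_one_div_A (k s : ℕ) (hk : 1 ≤ k) (hs : 1 ≤ s) :
    Summable (fun n : ℕ => 1 / A k s n) := by
  apply Summable.of_nonneg_of_le (fun n => one_div_nonneg.mpr (A_nonneg k s n)) (fun n => ?_) summable_inv_sq
  exact one_div_le_one_div_of_le (by positivity) (A_ge k s hk hs n)

lemma summable_aux1 (t : ℝ) : Summable (fun n : ℕ => 1/(((n:ℝ)+1)^2 + t^2)) := by
  apply Summable.of_nonneg_of_le (fun n => by positivity) (fun n => ?_) summable_inv_sq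
  apply one_div_le_one_div_of_le (by positivity)
  nlinarith [sq_nonneg t]

lemma summable_int_aux (t : ℝ) : Summable (fun j : ℤ => 1/((j:ℝ)^2 + t^2)) := by
  apply Summable.of_nat_of_neg_add_one
  · apply (summable_nat_add_iff 1).1
    have := summable_aux1 t
    simpa using this
  · exact (summable_aux1 t).congr (fun n => by push_cast; ring_nf)


noncomputable def S (t : ℝ) : ℝ := ∑' j : ℤ, 1/((j:ℝ)^2 + t^2)

lemma f_nonneg (k s n : ℕ) (t w : ℝ) :
    0 ≤ 2*|t| / (A k s n * ((B k s n + w)^2 + t^2)) :=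
  div_nonneg (by positivity) (mul_nonneg (A_nonneg k s n) (by positivity))

lemma rewrite_id (k s n : ℕ) (t : ℝ) (ε : ℤ) :
    (fun r : ℕ => 2*|t| / (A k s n * ((B k s n + (ε:ℝ)*((r:ℝ)+1))^2 + t^2)))
    = fun r : ℕ => (2*|t| / A k s n) *
        (1/(((((k:ℤ)*((n:ℤ)+1)^(2*s) + ε*((r:ℤ)+1)) : ℤ):ℝ)^2 + t^2)) := by
  funext r
  have h : ((((k:ℤ)*((n:ℤ)+1)^(2*s) + ε*((r:ℤ)+1)) : ℤ):ℝ)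
      = B k s n + (ε:ℝ)*((r:ℝ)+1) := by
    unfold B; push_cast; ring
  rw [h, mul_one_div, div_div]

lemma g_injective (k s n : ℕ) (ε : ℤ) (hε : ε ≠ 0) :
    Function.Injective (fun r : ℕ => (k:ℤ)*((n:ℤ)+1)^(2*s) + ε*((r:ℤ)+1)) := by
  intro a b h
  simp only [add_right_inj] at h
  have := mul_left_cancel₀ hε h
  exact_mod_cast add_right_cancel this

lemma summable_inner (k s : ℕ) (t : ℝ) (n : ℕ) (ε : ℤ) (hε : ε ≠ 0) :
    Summable (fun r : ℕ => 2*|t| / (A k s n * ((B k s n + (ε:ℝ)*((r:ℝ)+1))^2 + t^2))) := by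
  rw [rewrite_id]
  exact Summable.mul_left _ ((summable_int_aux t).comp_injective (g_injective k s n ε hε))

lemma inner_tsum_le (k s : ℕ) (t : ℝ) (n : ℕ) (ε : ℤ) (hε : ε ≠ 0) :
    ∑' r : ℕ, 2*|t| / (A k s n * ((B k s n + (ε:ℝ)*((r:ℝ)+1))^2 + t^2))
      ≤ (2*|t| / A k s n) * S t := by
  rw [rewrite_id, tsum_mul_left]
  apply mul_le_mul_of_nonneg_left _ (div_nonneg (by positivity) (A_nonneg k s n))
  exact tsum_comp_le_tsum_of_inj (summable_int_aux t) (fun j => by positivity)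
    (g_injective k s n ε hε)

lemma summable_double (k s : ℕ) (hk : 1 ≤ k) (hs : 1 ≤ s) (t : ℝ) (ε : ℤ) (hε : ε ≠ 0) :
    Summable (fun p : ℕ × ℕ =>
      2*|t| / (A k s p.1 * ((B k s p.1 + (ε:ℝ)*((p.2:ℝ)+1))^2 + t^2))) := by
  rw [summable_prod_of_nonneg (fun p => f_nonneg k s p.1 t _)]
  constructor
  · exact fun n => summable_inner k s t n ε hε
  · apply Summable.of_nonneg_of_le
      (fun n => tsum_nonneg (fun r => f_nonneg k s n t _))
      (fun n => inner_tsum_le k s t n ε hε)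
    have h2 : Summable (fun n : ℕ => (2 * |t| * S t) * (1 / A k s n)) :=
      (summable_one_div_A k s hk hs).mul_left _
    exact h2.congr (fun n => by ring)

lemma summable_M (k s : ℕ) (hk : 1 ≤ k) (hs : 1 ≤ s) (t : ℝ) (ε : ℤ) (hε : ε ≠ 0) :
    Summable (fun r : ℕ => ∑' n : ℕ,
      2*|t| / (A k s n * ((B k s n + (ε:ℝ)*((r:ℝ)+1))^2 + t^2))) := by
  have h := (summable_double k s hk hs t ε hε).prod_symm
  have h0 : ∀ p : ℕ × ℕ, (0:ℝ) ≤
      2*|t| / (A k s p.2 * ((B k s p.2 + (ε:ℝ)*((p.1:ℝ)+1))^2 + t^2)) :=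
    fun p => f_nonneg k s p.2 t _
  exact ((summable_prod_of_nonneg h0).1 h).2

lemma summable_inner_n (k s : ℕ) (hk : 1 ≤ k) (hs : 1 ≤ s) (t : ℝ) (ht : t ≠ 0) (w : ℝ) :
    Summable (fun n : ℕ => 2*|t| / (A k s n * ((B k s n + w)^2 + t^2))) := by
  apply Summable.of_nonneg_of_le (fun n => f_nonneg k s n t w) (fun n => ?_)
    ((summable_one_div_A k s hk hs).mul_left (2 * |t| / t^2))
  have hA := A_pos k s hk n
  rw [div_mul_eq_mul_div, mul_one_div, div_div]
  apply div_le_div_of_nonneg_left (by positivity) (by positivity)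
  have h1 : t^2 ≤ (B k s n + w)^2 + t^2 := by nlinarith [sq_nonneg (B k s n + w)]
  exact mul_le_mul_of_nonneg_left h1 (A_nonneg k s n)


lemma cast_A (k s n : ℕ) : ((k:ℂ)^2*((n:ℂ)+1)^(4*s)) = ((A k s n : ℝ):ℂ) := by
  unfold A; push_cast; ring

lemma cast_B (k s n : ℕ) : ((k:ℂ)*((n:ℂ)+1)^(2*s)) = ((B k s n : ℝ):ℂ) := by
  unfold B; push_cast; ring

lemma Fks_term_summable (k s : ℕ) (hk : 1 ≤ k) (hs : 1 ≤ s) (z : ℂ) (hz : z.im ≠ 0) :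
    Summable (fun n : ℕ => 1 / ((k:ℂ)^2 * ((n:ℂ)+1)^(4*s) * ((k:ℂ)*((n:ℂ)+1)^(2*s) + z))) := by
  apply Summable.of_norm_bounded (g := fun n : ℕ => (1/|z.im|) * (1/((n:ℝ)+1)^2))
    (summable_inv_sq.mul_left _)
  intro n
  have hA := A_pos k s hk n
  rw [norm_div, norm_one, norm_mul, cast_A, Complex.norm_real,
    Real.norm_eq_abs, abs_of_pos hA]
  have him : |z.im| ≤ ‖(k:ℂ)*((n:ℂ)+1)^(2*s) + z‖ := by
    rw [cast_B]
    calc |z.im| = |(((B k s n : ℝ):ℂ) + z).im| := by simp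
      _ ≤ ‖((B k s n : ℝ):ℂ) + z‖ := Complex.abs_im_le_norm _
  have himpos : (0:ℝ) < |z.im| := abs_pos.mpr hz
  calc 1 / (A k s n * ‖(k:ℂ)*((n:ℂ)+1)^(2*s) + z‖)
      ≤ 1 / (A k s n * |z.im|) := by
        apply one_div_le_one_div_of_le (by positivity)
        exact mul_le_mul_of_nonneg_left him (A_nonneg k s n)
    _ = (1/|z.im|) * (1/A k s n) := by field_simp
    _ ≤ (1/|z.im|) * (1/((n:ℝ)+1)^2) := by
        apply mul_le_mul_of_nonneg_left _ (by positivity)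
        exact one_div_le_one_div_of_le (by positivity) (A_ge k s hk hs n)

lemma term_diff_norm (k s : ℕ) (hk : 1 ≤ k) (t : ℝ) (ht : t ≠ 0) (w : ℝ) (n : ℕ) :
    ‖1 / ((k:ℂ)^2*((n:ℂ)+1)^(4*s)*((k:ℂ)*((n:ℂ)+1)^(2*s) + ((w:ℂ) - Complex.I*(t:ℂ))))
      - 1 / ((k:ℂ)^2*((n:ℂ)+1)^(4*s)*((k:ℂ)*((n:ℂ)+1)^(2*s) + ((w:ℂ) + Complex.I*(t:ℂ))))‖
      = 2*|t| / (A k s n * ((B k s n + w)^2 + t^2)) := by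
  set b : ℝ := B k s n + w with hb
  have hApos := A_pos k s hk n
  have haz : ((A k s n:ℝ):ℂ) ≠ 0 := Complex.ofReal_ne_zero.mpr hApos.ne'
  have hc1 : ((b:ℂ) - Complex.I*(t:ℂ)) ≠ 0 := by
    intro h
    apply ht
    have := congrArg Complex.im h
    simpa using this
  have hc2 : ((b:ℂ) + Complex.I*(t:ℂ)) ≠ 0 := by
    intro h
    apply ht
    have := congrArg Complex.im h
    simpa using this
  have e1 : ((k:ℂ)*((n:ℂ)+1)^(2*s) + ((w:ℂ) - Complex.I*(t:ℂ)))
      = (b:ℂ) - Complex.I*(t:ℂ) := by rw [cast_B, hb]; push_cast; ring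
  have e2 : ((k:ℂ)*((n:ℂ)+1)^(2*s) + ((w:ℂ) + Complex.I*(t:ℂ)))
      = (b:ℂ) + Complex.I*(t:ℂ) := by rw [cast_B, hb]; push_cast; ring
  have hbt : ((b^2+t^2 : ℝ):ℂ) = ((b:ℂ) - Complex.I*(t:ℂ))*((b:ℂ) + Complex.I*(t:ℂ)) := by
    have h2 : ((b:ℂ) - Complex.I*(t:ℂ))*((b:ℂ) + Complex.I*(t:ℂ))
        = (b:ℂ)^2 - Complex.I^2*(t:ℂ)^2 := by ring
    rw [h2, Complex.I_sq]; push_cast; ring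
  have key : 1/(((A k s n:ℝ):ℂ)*((b:ℂ) - Complex.I*(t:ℂ)))
      - 1/(((A k s n:ℝ):ℂ)*((b:ℂ) + Complex.I*(t:ℂ)))
      = (2*Complex.I*(t:ℂ))/(((A k s n:ℝ):ℂ) * ((b^2+t^2 : ℝ):ℂ)) := by
    rw [hbt]
    field_simp
    ring
  rw [cast_A, e1, e2, key, norm_div, norm_mul, norm_mul, norm_mul,
    Complex.norm_real, Complex.norm_real, Complex.norm_I,
    Real.norm_eq_abs, Real.norm_eq_abs, Complex.norm_real, Real.norm_eq_abs,
    abs_of_pos hApos, abs_of_nonneg (show (0:ℝ) ≤ b^2+t^2 by positivity)]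
  norm_num

lemma Fdiff_bound (k s : ℕ) (hk : 1 ≤ k) (hs : 1 ≤ s) (t : ℝ) (ht : t ≠ 0) (w : ℝ) :
    ‖Fks k s ((w:ℂ) - Complex.I*(t:ℂ)) - Fks k s ((w:ℂ) + Complex.I*(t:ℂ))‖
      ≤ ∑' n : ℕ, 2*|t| / (A k s n * ((B k s n + w)^2 + t^2)) := by
  have hz1 : ((w:ℂ) - Complex.I*(t:ℂ)).im ≠ 0 := by simpa using ht
  have hz2 : ((w:ℂ) + Complex.I*(t:ℂ)).im ≠ 0 := by simpa using ht
  have h1 := Fks_term_summable k s hk hs _ hz1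
  have h2 := Fks_term_summable k s hk hs _ hz2
  unfold Fks
  rw [← Summable.tsum_sub h1 h2]
  have hfun : (fun n : ℕ =>
      ‖1 / ((k:ℂ)^2*((n:ℂ)+1)^(4*s)*((k:ℂ)*((n:ℂ)+1)^(2*s) + ((w:ℂ) - Complex.I*(t:ℂ))))
      - 1 / ((k:ℂ)^2*((n:ℂ)+1)^(4*s)*((k:ℂ)*((n:ℂ)+1)^(2*s) + ((w:ℂ) + Complex.I*(t:ℂ))))‖)
      = fun n : ℕ => 2*|t| / (A k s n * ((B k s n + w)^2 + t^2)) :=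
    funext (fun n => term_diff_norm k s hk t ht w n)
  have hns : Summable (fun n : ℕ =>
      ‖1 / ((k:ℂ)^2*((n:ℂ)+1)^(4*s)*((k:ℂ)*((n:ℂ)+1)^(2*s) + ((w:ℂ) - Complex.I*(t:ℂ))))
      - 1 / ((k:ℂ)^2*((n:ℂ)+1)^(4*s)*((k:ℂ)*((n:ℂ)+1)^(2*s) + ((w:ℂ) + Complex.I*(t:ℂ))))‖) := by
    rw [hfun]; exact summable_inner_n k s hk hs t ht w
  calc ‖∑' n : ℕ, (1 / ((k:ℂ)^2*((n:ℂ)+1)^(4*s)*((k:ℂ)*((n:ℂ)+1)^(2*s) + ((w:ℂ) - Complex.I*(t:ℂ))))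
      - 1 / ((k:ℂ)^2*((n:ℂ)+1)^(4*s)*((k:ℂ)*((n:ℂ)+1)^(2*s) + ((w:ℂ) + Complex.I*(t:ℂ)))))‖
      ≤ ∑' n : ℕ, ‖1 / ((k:ℂ)^2*((n:ℂ)+1)^(4*s)*((k:ℂ)*((n:ℂ)+1)^(2*s) + ((w:ℂ) - Complex.I*(t:ℂ))))
      - 1 / ((k:ℂ)^2*((n:ℂ)+1)^(4*s)*((k:ℂ)*((n:ℂ)+1)^(2*s) + ((w:ℂ) + Complex.I*(t:ℂ))))‖ :=
        norm_tsum_le_tsum_norm hns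
    _ = ∑' n : ℕ, 2*|t| / (A k s n * ((B k s n + w)^2 + t^2)) := by rw [hfun]

end St5

open St5 in
/-- Lemma 10 of the paper. -/
theorem statement5 (k s : ℕ) (hk : 1 ≤ k) (hs : 1 ≤ s) (t : ℝ) (ht : t ≠ 0) :
    (∀ β ∈ Set.Icc (-1 : ℝ) 1, Summable (fun r : ℕ =>
      ‖(-1 : ℂ) ^ (r + 1) * Complex.exp (Real.pi * Complex.I * ((r : ℂ) + 1) * (β : ℂ)) *
        (Fks k s (((r : ℂ) + 1) - Complex.I * (t : ℂ))
          - Fks k s (((r : ℂ) + 1) + Complex.I * (t : ℂ)))‖)) ∧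
    (∀ β ∈ Set.Icc (-1 : ℝ) 1, Summable (fun r : ℕ =>
      ‖(-1 : ℂ) ^ (r + 1) * Complex.exp (-(Real.pi * Complex.I * ((r : ℂ) + 1) * (β : ℂ))) *
        (Fks k s (-((r : ℂ) + 1) - Complex.I * (t : ℂ))
          - Fks k s (-((r : ℂ) + 1) + Complex.I * (t : ℂ)))‖)) ∧
    TendstoUniformlyOn
      (fun n : ℕ => fun β : ℝ => ∑ r ∈ Finset.range n,
        (-1 : ℂ) ^ (r + 1) * Complex.exp (Real.pi * Complex.I * ((r : ℂ) + 1) * (β : ℂ)) *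
          (Fks k s (((r : ℂ) + 1) - Complex.I * (t : ℂ))
            - Fks k s (((r : ℂ) + 1) + Complex.I * (t : ℂ))))
      (fun β : ℝ => ∑' r : ℕ,
        (-1 : ℂ) ^ (r + 1) * Complex.exp (Real.pi * Complex.I * ((r : ℂ) + 1) * (β : ℂ)) *
          (Fks k s (((r : ℂ) + 1) - Complex.I * (t : ℂ))
            - Fks k s (((r : ℂ) + 1) + Complex.I * (t : ℂ))))
      atTop (Set.Icc (-1 : ℝ) 1) ∧
    TendstoUniformlyOn
      (fun n : ℕ => fun β : ℝ => ∑ r ∈ Finset.range n,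
        (-1 : ℂ) ^ (r + 1) * Complex.exp (-(Real.pi * Complex.I * ((r : ℂ) + 1) * (β : ℂ))) *
          (Fks k s (-((r : ℂ) + 1) - Complex.I * (t : ℂ))
            - Fks k s (-((r : ℂ) + 1) + Complex.I * (t : ℂ))))
      (fun β : ℝ => ∑' r : ℕ,
        (-1 : ℂ) ^ (r + 1) * Complex.exp (-(Real.pi * Complex.I * ((r : ℂ) + 1) * (β : ℂ))) *
          (Fks k s (-((r : ℂ) + 1) - Complex.I * (t : ℂ))
            - Fks k s (-((r : ℂ) + 1) + Complex.I * (t : ℂ))))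
      atTop (Set.Icc (-1 : ℝ) 1) := by
  have hM1 : Summable (fun r : ℕ => ∑' n : ℕ,
      2*|t| / (A k s n * ((B k s n + ((r:ℝ)+1))^2 + t^2))) :=
    (summable_M k s hk hs t 1 one_ne_zero).congr
      (fun r => tsum_congr (fun n => by push_cast; ring_nf))
  have hM2 : Summable (fun r : ℕ => ∑' n : ℕ,
      2*|t| / (A k s n * ((B k s n + -((r:ℝ)+1))^2 + t^2))) :=
    (summable_M k s hk hs t (-1) (by norm_num)).congr
      (fun r => tsum_congr (fun n => by push_cast; ring_nf))
  have hb1 : ∀ (r : ℕ) (β : ℝ),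
      ‖(-1 : ℂ) ^ (r + 1) * Complex.exp (Real.pi * Complex.I * ((r : ℂ) + 1) * (β : ℂ)) *
        (Fks k s (((r : ℂ) + 1) - Complex.I * (t : ℂ))
          - Fks k s (((r : ℂ) + 1) + Complex.I * (t : ℂ)))‖
      ≤ ∑' n : ℕ, 2*|t| / (A k s n * ((B k s n + ((r:ℝ)+1))^2 + t^2)) := by
    intro r β
    rw [norm_mul, norm_mul]
    have h1 : ‖(-1:ℂ)^(r+1)‖ = 1 := by simp
    have h2 : ‖Complex.exp (Real.pi * Complex.I * ((r : ℂ) + 1) * (β : ℂ))‖ = 1 := by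
      have e : (Real.pi * Complex.I * ((r : ℂ) + 1) * (β : ℂ))
          = ((Real.pi * ((r:ℝ)+1) * β : ℝ) : ℂ) * Complex.I := by push_cast; ring
      rw [e]
      exact Complex.norm_exp_ofReal_mul_I _
    rw [h1, h2, one_mul, one_mul]
    have e1 : ((r : ℂ) + 1) - Complex.I * (t : ℂ)
        = ((((r:ℝ)+1) : ℝ) : ℂ) - Complex.I * (t : ℂ) := by push_cast; ring
    have e2 : ((r : ℂ) + 1) + Complex.I * (t : ℂ)
        = ((((r:ℝ)+1) : ℝ) : ℂ) + Complex.I * (t : ℂ) := by push_cast; ring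
    rw [e1, e2]
    exact Fdiff_bound k s hk hs t ht ((r:ℝ)+1)
  have hb2 : ∀ (r : ℕ) (β : ℝ),
      ‖(-1 : ℂ) ^ (r + 1) * Complex.exp (-(Real.pi * Complex.I * ((r : ℂ) + 1) * (β : ℂ))) *
        (Fks k s (-((r : ℂ) + 1) - Complex.I * (t : ℂ))
          - Fks k s (-((r : ℂ) + 1) + Complex.I * (t : ℂ)))‖
      ≤ ∑' n : ℕ, 2*|t| / (A k s n * ((B k s n + -((r:ℝ)+1))^2 + t^2)) := by
    intro r β
    rw [norm_mul, norm_mul]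
    have h1 : ‖(-1:ℂ)^(r+1)‖ = 1 := by simp
    have h2 : ‖Complex.exp (-(Real.pi * Complex.I * ((r : ℂ) + 1) * (β : ℂ)))‖ = 1 := by
      have e : (-(Real.pi * Complex.I * ((r : ℂ) + 1) * (β : ℂ)))
          = ((-(Real.pi * ((r:ℝ)+1) * β) : ℝ) : ℂ) * Complex.I := by push_cast; ring
      rw [e]
      exact Complex.norm_exp_ofReal_mul_I _
    rw [h1, h2, one_mul, one_mul]
    have e1 : -((r : ℂ) + 1) - Complex.I * (t : ℂ)
        = (((-((r:ℝ)+1)) : ℝ) : ℂ) - Complex.I * (t : ℂ) := by push_cast; ring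
    have e2 : -((r : ℂ) + 1) + Complex.I * (t : ℂ)
        = (((-((r:ℝ)+1)) : ℝ) : ℂ) + Complex.I * (t : ℂ) := by push_cast; ring
    rw [e1, e2]
    exact Fdiff_bound k s hk hs t ht (-((r:ℝ)+1))
  refine ⟨fun β hβ => ?_, fun β hβ => ?_, ?_, ?_⟩
  · exact Summable.of_nonneg_of_le (fun r => norm_nonneg _) (fun r => hb1 r β) hM1
  · exact Summable.of_nonneg_of_le (fun r => norm_nonneg _) (fun r => hb2 r β) hM2
  · exact tendstoUniformlyOn_tsum_nat hM1 (fun r β _ => hb1 r β)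
  · exact tendstoUniformlyOn_tsum_nat hM2 (fun r β _ => hb2 r β)
end

section
/- For every natural number N ≥ 1, σ(N) = q_1(N)·√N + Σ_{a=1}^{N−1} q_1(4N+a^2)·√(4N+a^2), where σ(N) = Σ_{d | N} d is the sum-of-divisors function. -/
open scoped Classical

/-- `qf k N = 1` if `N = k·m²` for some natural `m ≥ 1`, and `0` otherwise. -/
noncomputable def qf (k N : ℕ) : ℝ :=
  if ∃ m : ℕ, 1 ≤ m ∧ N = k * m ^ 2 then 1 else 0

lemma aux_uniq {N b d d' : ℕ} (h : d * (d + b) = N) (h' : d' * (d' + b) = N) :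
    d = d' := by
  rcases lt_trichotomy d d' with hlt | heq | hgt
  · nlinarith
  · exact heq
  · nlinarith

lemma aux_square_to_div {N b m : ℕ} (hN : 0 < N) (hb : 1 ≤ b)
    (hm : 4 * N + b ^ 2 = m ^ 2) :
    ∃ d, d ∣ N ∧ d * d < N ∧ N / d - d = b ∧ m = d + N / d := by
  have hbm : b < m := by nlinarith
  obtain ⟨c, hc⟩ : ∃ c, m = b + c := ⟨m - b, by omega⟩
  have h4 : 4 * N = c * (c + 2 * b) := by nlinarith
  have hceven : Even c := by
    rcases Nat.even_or_odd c with he | ho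
    · exact he
    · exfalso
      have hodd : Odd (c * (c + 2 * b)) :=
        ho.mul (ho.add_even (even_two_mul b))
      rw [← h4] at hodd
      exact (Nat.not_odd_iff_even.mpr ⟨2 * N, by ring⟩) hodd
  obtain ⟨d, hd⟩ := hceven
  have hdN : d * (d + b) = N := by nlinarith
  have hdpos : 0 < d := by
    rcases Nat.eq_zero_or_pos d with h0 | h
    · subst h0; simp at hdN; omega
    · exact h
  have hdvd : d ∣ N := ⟨d + b, hdN.symm⟩
  have hdiv : N / d = d + b := by
    rw [← hdN]; exact Nat.mul_div_cancel_left _ hdpos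
  refine ⟨d, hdvd, ?_, by omega, by omega⟩
  nlinarith [hdN, hdpos, hb]

lemma aux_div_facts {N d : ℕ} (hN : 0 < N) (hd : d ∣ N) (hlt : d * d < N) :
    4 * N + (N / d - d) ^ 2 = (d + N / d) ^ 2 ∧ 1 ≤ N / d - d ∧
      N / d - d ≤ N - 1 ∧ 1 ≤ d + N / d := by
  have hdpos : 0 < d := by
    rcases Nat.eq_zero_or_pos d with h0 | h
    · exfalso; subst h0; simp at hlt; omega
    · exact h
  have hmul : d * (N / d) = N := Nat.mul_div_cancel' hd
  have hdlt : d < N / d := by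
    have : d * d < d * (N / d) := by rw [hmul]; exact hlt
    exact lt_of_mul_lt_mul_left this (Nat.zero_le d)
  obtain ⟨b, hb⟩ : ∃ b, N / d = d + b := ⟨N / d - d, by omega⟩
  have hbN : d * (d + b) = N := by rw [← hb]; exact hmul
  have hNd_le : N / d ≤ N := Nat.div_le_self N d
  refine ⟨?_, by omega, by omega, by omega⟩
  have hsub : N / d - d = b := by omega
  rw [hsub, hb, ← hbN]; ring

/-- equation (6.1) of the paper. -/
theorem statement17 (N : ℕ) (hN : 1 ≤ N) :
    (∑ d ∈ Nat.divisors N, (d : ℝ)) =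
      qf 1 N * Real.sqrt N
      + ∑ a ∈ Finset.range (N - 1),
          qf 1 (4 * N + (a + 1) ^ 2) * Real.sqrt ((4 * N + (a + 1) ^ 2 : ℕ)) := by
  have hN0 : 0 < N := hN
  set T : Finset ℕ := (Nat.divisors N).filter (fun d => d * d < N) with hT
  -- Lemma A
  have hA : qf 1 N * Real.sqrt N =
      ∑ d ∈ (Nat.divisors N).filter (fun d => d * d = N), (d : ℝ) := by
    by_cases hsq : ∃ m : ℕ, 1 ≤ m ∧ N = 1 * m ^ 2
    · obtain ⟨m, hm1, hmN⟩ := hsq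
      have hmN' : N = m * m := by rw [hmN]; ring
      have hfilter : (Nat.divisors N).filter (fun d => d * d = N) = {m} := by
        ext d
        simp only [Finset.mem_filter, Nat.mem_divisors, Finset.mem_singleton]
        constructor
        · rintro ⟨⟨hdvd, _⟩, hdd⟩
          have : d * d = m * m := by rw [hdd, hmN']
          exact Nat.mul_self_inj.mp this
        · intro h
          rw [h]
          exact ⟨⟨⟨m, hmN'⟩, hN0.ne'⟩, hmN'.symm⟩
      rw [hfilter, Finset.sum_singleton]
      have : qf 1 N = 1 := by rw [qf, if_pos ⟨m, hm1, hmN⟩]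
      rw [this, one_mul, hmN']
      push_cast
      rw [← sq (m : ℝ), Real.sqrt_sq (by positivity)]
    · have hfilter : (Nat.divisors N).filter (fun d => d * d = N) = ∅ := by
        ext d
        simp only [Finset.mem_filter, Nat.mem_divisors, Finset.notMem_empty,
          iff_false]
        rintro ⟨⟨hdvd, _⟩, hdd⟩
        have hd1 : 1 ≤ d := by
          rcases Nat.eq_zero_or_pos d with h0 | h
          · subst h0; simp at hdd; omega
          · exact h
        exact hsq ⟨d, hd1, by rw [← hdd]; ring⟩
      rw [hfilter, Finset.sum_empty, qf, if_neg hsq, zero_mul]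
  -- Lemma B
  have hB : ∑ d ∈ (Nat.divisors N).filter (fun d => N < d * d), (d : ℝ) =
      ∑ d ∈ T, ((N / d : ℕ) : ℝ) := by
    apply Finset.sum_nbij' (fun d => N / d) (fun d => N / d)
    · intro d hd
      simp only [Finset.mem_filter, Nat.mem_divisors] at hd
      obtain ⟨⟨hdvd, _⟩, hgt⟩ := hd
      have hdpos : 0 < d := by
        rcases Nat.eq_zero_or_pos d with h0 | h
        · subst h0; simp at hgt
        · exact h
      have hmul : d * (N / d) = N := Nat.mul_div_cancel' hdvd
      have hepos : 0 < N / d := Nat.div_pos (Nat.le_of_dvd hN0 hdvd) hdpos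
      have helt : N / d < d := by
        have : d * (N / d) < d * d := by rw [hmul]; exact hgt
        exact lt_of_mul_lt_mul_left this (Nat.zero_le d)
      simp only [hT, Finset.mem_filter, Nat.mem_divisors]
      refine ⟨⟨Nat.div_dvd_of_dvd hdvd, hN0.ne'⟩, ?_⟩
      nlinarith [hmul, helt, hepos]
    · intro d hd
      simp only [hT, Finset.mem_filter, Nat.mem_divisors] at hd
      obtain ⟨⟨hdvd, _⟩, hlt⟩ := hd
      have hdpos : 0 < d := by
        rcases Nat.eq_zero_or_pos d with h0 | h
        · exfalso; subst h0; simp at hlt; omega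
        · exact h
      have hmul : d * (N / d) = N := Nat.mul_div_cancel' hdvd
      have hdlt : d < N / d := by
        have : d * d < d * (N / d) := by rw [hmul]; exact hlt
        exact lt_of_mul_lt_mul_left this (Nat.zero_le d)
      simp only [Finset.mem_filter, Nat.mem_divisors]
      refine ⟨⟨Nat.div_dvd_of_dvd hdvd, hN0.ne'⟩, ?_⟩
      have hdpos' : 0 < N / d := Nat.div_pos (Nat.le_of_dvd hN0 hdvd) hdpos
      nlinarith [hmul, hdlt, hdpos']
    · intro d hd
      simp only [Finset.mem_filter, Nat.mem_divisors] at hd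
      exact Nat.div_div_self hd.1.1 hN0.ne'
    · intro d hd
      simp only [hT, Finset.mem_filter, Nat.mem_divisors] at hd
      exact Nat.div_div_self hd.1.1 hN0.ne'
    · intro d hd
      simp only [Finset.mem_filter, Nat.mem_divisors] at hd
      rw [Nat.div_div_self hd.1.1 hN0.ne']
  -- Lemma C1 : pointwise identity for b in Icc 1 (N-1)
  have hC1 : ∀ b ∈ Finset.Icc 1 (N - 1),
      qf 1 (4 * N + b ^ 2) * Real.sqrt ((4 * N + b ^ 2 : ℕ)) =
        ∑ d ∈ T.filter (fun d => N / d - d = b), ((d + N / d : ℕ) : ℝ) := by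
    intro b hb
    rw [Finset.mem_Icc] at hb
    by_cases hex : ∃ d, d ∈ T ∧ N / d - d = b
    · obtain ⟨d, hdT, hdb⟩ := hex
      have hdT' := hdT
      simp only [hT, Finset.mem_filter, Nat.mem_divisors] at hdT'
      obtain ⟨⟨hdvd, _⟩, hlt⟩ := hdT'
      obtain ⟨hsq, hb1, _, hm1⟩ := aux_div_facts hN0 hdvd hlt
      rw [hdb] at hsq
      have hfilter : T.filter (fun d => N / d - d = b) = {d} := by
        ext d'
        simp only [Finset.mem_filter, Finset.mem_singleton]
        constructor
        · rintro ⟨hd'T, hd'b⟩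
          have hd'T' := hd'T
          simp only [hT, Finset.mem_filter, Nat.mem_divisors] at hd'T'
          obtain ⟨⟨hdvd', _⟩, hlt'⟩ := hd'T'
          -- d' * (d' + b) = N and d * (d + b) = N
          have h1 : d' * (d' + b) = N := by
            have hmul : d' * (N / d') = N := Nat.mul_div_cancel' hdvd'
            have hdpos : 0 < d' := by
              rcases Nat.eq_zero_or_pos d' with h0 | h
              · exfalso; subst h0; simp at hlt'; omega
              · exact h
            have hdlt : d' < N / d' := by
              have : d' * d' < d' * (N / d') := by rw [hmul]; exact hlt'
              exact lt_of_mul_lt_mul_left this (Nat.zero_le d')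
            have : N / d' = d' + b := by omega
            rw [← this]; exact hmul
          have h2 : d * (d + b) = N := by
            have hmul : d * (N / d) = N := Nat.mul_div_cancel' hdvd
            have hdpos : 0 < d := by
              rcases Nat.eq_zero_or_pos d with h0 | h
              · exfalso; subst h0; simp at hlt; omega
              · exact h
            have hdlt : d < N / d := by
              have : d * d < d * (N / d) := by rw [hmul]; exact hlt
              exact lt_of_mul_lt_mul_left this (Nat.zero_le d)
            have : N / d = d + b := by omega
            rw [← this]; exact hmul
          exact aux_uniq h1 h2
        · rintro rfl; exact ⟨hdT, hdb⟩
      rw [hfilter, Finset.sum_singleton]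
      have hqf : qf 1 (4 * N + b ^ 2) = 1 := by
        rw [qf, if_pos ⟨d + N / d, hm1, by rw [one_mul]; exact hsq⟩]
      rw [hqf, one_mul, hsq]
      push_cast
      rw [Real.sqrt_sq (by positivity)]
    · have hfilter : T.filter (fun d => N / d - d = b) = ∅ := by
        ext d
        simp only [Finset.mem_filter, Finset.notMem_empty, iff_false]
        rintro ⟨hdT, hdb⟩
        exact hex ⟨d, hdT, hdb⟩
      rw [hfilter, Finset.sum_empty]
      have hqf : qf 1 (4 * N + b ^ 2) = 0 := by
        rw [qf, if_neg]
        rintro ⟨m, hm1, hmN⟩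
        rw [one_mul] at hmN
        obtain ⟨d, hdvd, hlt, hdb, _⟩ := aux_square_to_div hN0 hb.1 hmN
        refine hex ⟨d, ?_, hdb⟩
        simp only [hT, Finset.mem_filter, Nat.mem_divisors]
        exact ⟨⟨hdvd, hN0.ne'⟩, hlt⟩
      rw [hqf, zero_mul]
  -- Lemma C : the range sum
  have hC : ∑ a ∈ Finset.range (N - 1),
      qf 1 (4 * N + (a + 1) ^ 2) * Real.sqrt ((4 * N + (a + 1) ^ 2 : ℕ)) =
        ∑ d ∈ T, ((d + N / d : ℕ) : ℝ) := by
    have hrange : ∑ a ∈ Finset.range (N - 1),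
        qf 1 (4 * N + (a + 1) ^ 2) * Real.sqrt ((4 * N + (a + 1) ^ 2 : ℕ)) =
          ∑ b ∈ Finset.Icc 1 (N - 1),
            qf 1 (4 * N + b ^ 2) * Real.sqrt ((4 * N + b ^ 2 : ℕ)) := by
      have hIcc : Finset.Icc 1 (N - 1) = Finset.Ico 1 N := by
        rw [← Finset.Ico_add_one_right_eq_Icc]
        congr 1
        omega
      rw [hIcc, Finset.sum_Ico_eq_sum_range]
      apply Finset.sum_congr rfl
      intro a _
      rw [add_comm 1 a]
    rw [hrange, Finset.sum_congr rfl hC1]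
    apply Finset.sum_fiberwise_of_maps_to
    intro d hd
    simp only [hT, Finset.mem_filter, Nat.mem_divisors] at hd
    obtain ⟨⟨hdvd, _⟩, hlt⟩ := hd
    obtain ⟨_, h1, h2, _⟩ := aux_div_facts hN0 hdvd hlt
    exact Finset.mem_Icc.mpr ⟨h1, h2⟩
  -- Assemble
  rw [hA, hC]
  have hsplit1 : ∑ d ∈ Nat.divisors N, (d : ℝ) =
      ∑ d ∈ T, (d : ℝ) +
        ∑ d ∈ (Nat.divisors N).filter (fun d => ¬ d * d < N), (d : ℝ) :=
    (Finset.sum_filter_add_sum_filter_not _ _ _).symm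
  have hsplit2 : ∑ d ∈ (Nat.divisors N).filter (fun d => ¬ d * d < N), (d : ℝ) =
      ∑ d ∈ (Nat.divisors N).filter (fun d => d * d = N), (d : ℝ) +
        ∑ d ∈ (Nat.divisors N).filter (fun d => N < d * d), (d : ℝ) := by
    rw [← Finset.sum_filter_add_sum_filter_not
      ((Nat.divisors N).filter (fun d => ¬ d * d < N)) (fun d => d * d = N)]
    congr 1
    · congr 1
      rw [Finset.filter_filter]
      apply Finset.filter_congr
      intro d _
      constructor
      · rintro ⟨_, h⟩; exact h
      · intro h; exact ⟨by omega, h⟩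
    · congr 1
      rw [Finset.filter_filter]
      apply Finset.filter_congr
      intro d _
      constructor
      · rintro ⟨h1, h2⟩; omega
      · intro h; constructor <;> omega
  have hTsum : ∑ d ∈ T, ((d + N / d : ℕ) : ℝ) =
      ∑ d ∈ T, (d : ℝ) + ∑ d ∈ T, ((N / d : ℕ) : ℝ) := by
    rw [← Finset.sum_add_distrib]
    apply Finset.sum_congr rfl
    intro d _
    push_cast
    ring
  rw [hsplit1, hsplit2, hB, hTsum]
  ring
end
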